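/- Let p be a prime, e ≥ 1, q = p^e, let b be an integer with 0 ≤ b ≤ e−1, and let n be a non-negative integer. Then there exist a length m and a p^{e−b}-divisible linear code over F_q of effective length n if and only if there exist non-negative integers s and t with n = s·(q+1) + t·p^{e−b}. -/

import Mathlib

open Module Finset

noncomputable section
open scoped Classical

variable (F : Type) [Field F] [Fintype F]

instance finiteSubmodule (v : ℕ) : Finite (Submodule F (Fin v → F)) :=
  Finite.of_injective (fun s => (s : Set (Fin v → F))) SetLike.coe_injective

/-- The points of `PG(v-1,q)`: one-dimensional subspaces of `F_q^v`. -/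
abbrev PGPoint (v : ℕ) := {W : Submodule F (Fin v → F) // finrank F W = 1}

instance (v : ℕ) : Fintype (PGPoint F v) := Fintype.ofFinite _

/-- Cardinality of a multiset of points. -/
def mCard {v : ℕ} (M : PGPoint F v → ℕ) : ℕ := ∑ P, M P

/-- Multiplicity of a subspace: the sum of multiplicities over points contained in it. -/
def mVal {v : ℕ} (M : PGPoint F v → ℕ) (S : Submodule F (Fin v → F)) : ℕ :=
  ∑ P : PGPoint F v, if P.1 ≤ S then M P else 0

/-- A multiset of points is `Δ`-divisible if `#M ≡ M(H) (mod Δ)` for every hyperplane `H`. -/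
def IsDivisibleMultiset {v : ℕ} (Δ : ℕ) (M : PGPoint F v → ℕ) : Prop :=
  ∀ H : Submodule F (Fin v → F), finrank F H = v - 1 → mCard F M ≡ mVal F M H [MOD Δ]

/-- A set of points is `Δ`-divisible if `|S| ≡ |S ∩ H| (mod Δ)` for every hyperplane `H`. -/
def IsDivisibleSet {v : ℕ} (Δ : ℕ) (S : Set (PGPoint F v)) : Prop :=
  ∀ H : Submodule F (Fin v → F), finrank F H = v - 1 →
    S.ncard ≡ (S ∩ {P | P.1 ≤ H}).ncard [MOD Δ]

/-- A linear code `C ≤ F_q^m` is `Δ`-divisible if all Hamming weights are divisible by `Δ`. -/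
def IsDivisibleCode {m : ℕ} (Δ : ℕ) (C : Submodule F (Fin m → F)) : Prop :=
  ∀ c ∈ C, Δ ∣ hammingNorm c

/-- The effective length: the number of coordinates where some codeword is nonzero. -/
def effLength {m : ℕ} (C : Submodule F (Fin m → F)) : ℕ :=
  Nat.card {i : Fin m // ∃ c ∈ C, c i ≠ 0}

/-- `s_q(a,b,i)`, with `q = p^e`, written without division:
`s_q(a,b,0) = 1 + q + ⋯ + q^a` and `s_q(a,b,i) = p^{ie-b}·(1 + q + ⋯ + q^{a-i})` for `i ≥ 1`. -/
def sQ (p e a b i : ℕ) : ℕ :=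
  if i = 0 then ∑ j ∈ Finset.range (a + 1), (p ^ e) ^ j
  else p ^ (i * e - b) * ∑ j ∈ Finset.range (a - i + 1), (p ^ e) ^ j


namespace Stmt4Aux

variable {F}



def Jset {m : ℕ} (C : Submodule F (Fin m → F)) : Finset (Fin m) :=
  univ.filter fun i => ∃ c ∈ C, c i ≠ 0

lemma mem_Jset {m : ℕ} {C : Submodule F (Fin m → F)} {i : Fin m} :
    i ∈ Jset C ↔ ∃ c ∈ C, c i ≠ 0 := by simp [Jset]

lemma effLength_eq {m : ℕ} (C : Submodule F (Fin m → F)) :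
    effLength F C = (Jset C).card := by
  rw [effLength, Nat.card_eq_fintype_card, Fintype.card_subtype, Jset]

lemma wt_split {m : ℕ} {C : Submodule F (Fin m → F)} {w : Fin m → F} (hw : w ∈ C) :
    ((Jset C).filter fun i => w i = 0).card + hammingNorm w = (Jset C).card := by
  have h1 : hammingNorm w = ((Jset C).filter fun i => ¬ w i = 0).card := by
    rw [hammingNorm]
    congr 1
    ext i
    simp only [mem_filter, mem_univ, true_and, Jset, ne_eq]
    exact ⟨fun h => ⟨⟨w, hw, h⟩, h⟩, fun h => h.2⟩
  rw [h1, Finset.card_filter_add_card_filter_not]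

lemma fiber_card {m : ℕ} (C : Submodule F (Fin m → F)) (i : Fin m) (hi : ∃ c ∈ C, c i ≠ 0) :
    Fintype.card F * ((univ.filter fun w => w ∈ C ∧ w i = 0).card)
      = (univ.filter fun w => w ∈ C).card := by
  classical
  set ev : ↥C →ₗ[F] F := (LinearMap.proj i).comp C.subtype with hev
  have hsurj : LinearMap.range ev = ⊤ := by
    obtain ⟨c₀, hc₀, hne⟩ := hi
    rw [LinearMap.range_eq_top]
    intro α
    refine ⟨(α * (c₀ i)⁻¹) • ⟨c₀, hc₀⟩, ?_⟩
    simp [ev, hne]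
  have hcard := Submodule.card_eq_card_quotient_mul_card (LinearMap.ker ev)
  have hquot : Nat.card (↥C ⧸ LinearMap.ker ev) = Fintype.card F := by
    rw [Nat.card_congr (ev.quotKerEquivRange).toEquiv, hsurj]
    rw [Nat.card_congr (Submodule.topEquiv).toEquiv, Nat.card_eq_fintype_card]
  have hker : Nat.card (LinearMap.ker ev) = (univ.filter fun w => w ∈ C ∧ w i = 0).card := by
    rw [← Fintype.card_subtype, Nat.card_eq_fintype_card]
    apply Fintype.card_congr
    refine ⟨fun x => ⟨x.1.1, x.1.2, ?_⟩, fun w => ⟨⟨w.1, w.2.1⟩, ?_⟩, fun x => rfl, fun w => rfl⟩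
    · have := x.2
      rwa [LinearMap.mem_ker] at this
    · rw [LinearMap.mem_ker]
      exact w.2.2
  have hC : Nat.card ↥C = (univ.filter fun w => w ∈ C).card := by
    rw [Nat.card_eq_fintype_card, Fintype.card_subtype]
  rw [← hC, ← hker, ← hquot, hcard, mul_comm]

lemma core_identity {m : ℕ} (J : Finset (Fin m)) (u v : Fin m → F)
    (hcov : ∀ i ∈ J, u i = 0 → v i ≠ 0) :
    (J.filter fun i => v i = 0).card
      + ∑ a : F, (J.filter fun i => (u + a • v) i = 0).card = J.card := by
  simp only [Finset.card_filter]
  rw [Finset.sum_comm]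
  rw [← Finset.sum_add_distrib]
  have : ∀ i ∈ J,
      ((if v i = 0 then 1 else 0) + ∑ a : F, if (u + a • v) i = 0 then 1 else 0) = 1 := by
    intro i hi
    by_cases hv : v i = 0
    · have hu : u i ≠ 0 := fun h => hcov i hi h hv
      rw [if_pos hv]
      have : ∀ a : F, ¬ ((u + a • v) i = 0) := by
        intro a
        simp [hv, hu]
      simp only [this, if_false, Finset.sum_const_zero]
      simp [hv, hu]
    · rw [if_neg hv]
      have hiff : ∀ a : F, ((u + a • v) i = 0) ↔ a = -(u i) / (v i) := by
        intro a
        simp only [Pi.add_apply, Pi.smul_apply, smul_eq_mul]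
        rw [eq_div_iff hv]
        constructor
        · intro h; linear_combination h
        · intro h; linear_combination h
      simp only [hiff]
      simp
  rw [Finset.sum_congr rfl this, Finset.sum_const, smul_eq_mul, mul_one]

lemma exists_cov {m : ℕ} (C : Submodule F (Fin m → F))
    (hlt : (Jset C).card < Fintype.card F * Fintype.card F) :
    ∃ u v, u ∈ C ∧ v ∈ C ∧ ∀ i ∈ Jset C, u i = 0 → v i ≠ 0 := by
  classical
  set J := Jset C with hJdef
  have hJ : ∀ i ∈ J, ∃ c ∈ C, c i ≠ 0 := fun i hi => mem_Jset.mp hi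
  set q := Fintype.card F with hq
  set CF : Finset (Fin m → F) := univ.filter fun w => w ∈ C with hCF
  set K : Fin m → Finset (Fin m → F) := fun i => univ.filter fun w => w ∈ C ∧ w i = 0 with hK
  have hKfib : ∀ i ∈ J, q * (K i).card = CF.card := fun i hi => fiber_card C i (hJ i hi)
  set bad : Finset ((Fin m → F) × (Fin m → F)) :=
    (CF ×ˢ CF).filter fun uv => ∃ i ∈ J, uv.1 i = 0 ∧ uv.2 i = 0 with hbad
  have hsub : bad ⊆ J.biUnion fun i => (K i) ×ˢ (K i) := by
    intro uv huv
    simp only [hbad, mem_filter, mem_product, hCF, mem_univ, true_and] at huv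
    obtain ⟨⟨hu, hv⟩, i, hi, h1, h2⟩ := huv
    simp only [mem_biUnion]
    exact ⟨i, hi, by simp [hK, mem_product, hu, hv, h1, h2]⟩
  have hbadcard : bad.card ≤ ∑ i ∈ J, (K i).card * (K i).card := by
    calc bad.card ≤ (J.biUnion fun i => (K i) ×ˢ (K i)).card := Finset.card_le_card hsub
    _ ≤ ∑ i ∈ J, ((K i) ×ˢ (K i)).card := Finset.card_biUnion_le
    _ = ∑ i ∈ J, (K i).card * (K i).card := by simp [Finset.card_product]
  have hCF0 : 0 < CF.card := by
    refine Finset.card_pos.mpr ⟨0, ?_⟩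
    simp [hCF, C.zero_mem]
  have hmain : (q * q) * bad.card < (q * q) * (CF.card * CF.card) := by
    calc (q * q) * bad.card ≤ (q * q) * ∑ i ∈ J, (K i).card * (K i).card :=
          Nat.mul_le_mul_left _ hbadcard
    _ = ∑ i ∈ J, (q * (K i).card) * (q * (K i).card) := by
          rw [Finset.mul_sum]; congr 1; ext i; ring
    _ = ∑ i ∈ J, CF.card * CF.card := by
          refine Finset.sum_congr rfl ?_
          intro i hi
          rw [hKfib i hi]
    _ = J.card * (CF.card * CF.card) := by rw [Finset.sum_const, smul_eq_mul]
    _ < (q * q) * (CF.card * CF.card) := by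
          apply Nat.mul_lt_mul_of_lt_of_le hlt (le_refl _)
          positivity
  have hblt : bad.card < (CF ×ˢ CF).card := by
    rw [Finset.card_product]
    exact Nat.lt_of_mul_lt_mul_left hmain
  have hns : ¬ (CF ×ˢ CF ⊆ bad) := fun h => absurd (Finset.card_le_card h) (not_le.mpr hblt)
  obtain ⟨uv, huv, hnb⟩ := Finset.not_subset.mp hns
  refine ⟨uv.1, uv.2, ?_, ?_, ?_⟩
  · have := (Finset.mem_product.mp huv).1
    simpa [hCF] using this
  · have := (Finset.mem_product.mp huv).2
    simpa [hCF] using this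
  · intro i hi h1 h2
    exact hnb (by simp only [hbad, mem_filter]; exact ⟨huv, i, hi, h1, h2⟩)

/-- Forward direction. -/
lemma forward {m : ℕ} (Δ : ℕ) (hΔpos : 0 < Δ) (hΔdvd : Δ ∣ Fintype.card F)
    (C : Submodule F (Fin m → F)) (hdiv : ∀ c ∈ C, Δ ∣ hammingNorm c) :
    ∃ s t : ℕ, effLength F C = s * (Fintype.card F + 1) + t * Δ := by
  classical
  set q := Fintype.card F with hq
  set n := effLength F C with hn
  set c := n % Δ with hc
  by_cases hc0 : c = 0
  · refine ⟨0, n / Δ, ?_⟩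
    have : Δ ∣ n := Nat.dvd_of_mod_eq_zero hc0
    rw [Nat.div_mul_cancel this]
    ring
  · -- key inequality
    have hkey : c * (q + 1) ≤ n := by
      by_contra hlt
      push_neg at hlt
      have hcq : c < q := lt_of_lt_of_le (Nat.mod_lt _ hΔpos) (Nat.le_of_dvd Fintype.card_pos hΔdvd)
      have hn2 : n < q * q := by
        calc n < c * (q + 1) := hlt
        _ = c * q + c := by ring
        _ < c * q + q := by omega
        _ = (c + 1) * q := by ring
        _ ≤ q * q := Nat.mul_le_mul_right q hcq
      have hJcard : (Jset C).card < q * q := by rw [← effLength_eq]; exact hn2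
      obtain ⟨u, v, hu, hv, hcov⟩ := exists_cov C hJcard
      have hcore := core_identity (Jset C) u v hcov
      -- each z-term is ≥ c
      have hz : ∀ w, w ∈ C → c ≤ ((Jset C).filter fun i => w i = 0).card := by
        intro w hw
        have hsplit := wt_split hw
        obtain ⟨j, hj⟩ := hdiv w hw
        set z := ((Jset C).filter fun i => w i = 0).card with hzdef
        have hzmod : z % Δ = c := by
          have hzn : z + Δ * j = n := by rw [← hj, hsplit, ← effLength_eq]
          rw [hc, ← hzn, Nat.add_mul_mod_self_left]
        calc c = z % Δ := hzmod.symm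
        _ ≤ z := Nat.mod_le _ _
      have hlb : c * (q + 1) ≤ (Jset C).card := by
        rw [← hcore]
        have h1 : c ≤ ((Jset C).filter fun i => v i = 0).card := hz v hv
        have h2 : ∀ a : F, c ≤ ((Jset C).filter fun i => (u + a • v) i = 0).card :=
          fun a => hz _ (C.add_mem hu (C.smul_mem a hv))
        calc c * (q + 1) = c + q * c := by ring
        _ ≤ ((Jset C).filter fun i => v i = 0).card
            + ∑ a : F, ((Jset C).filter fun i => (u + a • v) i = 0).card := by
              apply Nat.add_le_add h1
              calc q * c = ∑ _a : F, c := by rw [Finset.sum_const, Finset.card_univ, smul_eq_mul]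
              _ ≤ _ := Finset.sum_le_sum fun a _ => h2 a
      rw [← effLength_eq] at hlb
      omega
    -- assemble
    obtain ⟨d, hd⟩ := hΔdvd
    have hdm : n = Δ * (n / Δ) + c := (Nat.div_add_mod n Δ).symm
    set k := n / Δ with hk
    have h1 : c * (q + 1) = Δ * (c * d) + c := by rw [hd]; ring
    have hkd : c * d ≤ k := by
      have : Δ * (c * d) + c ≤ Δ * k + c := by rw [← h1, ← hdm]; exact hkey
      have h2 : Δ * (c * d) ≤ Δ * k := by omega
      exact Nat.le_of_mul_le_mul_left h2 hΔpos
    refine ⟨c, k - c * d, ?_⟩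
    rw [h1, hdm]
    zify [hkd]
    ring




def Good (Δ n : ℕ) : Prop :=
  ∃ (m : ℕ) (C : Submodule F (Fin m → F)), IsDivisibleCode F Δ C ∧ effLength F C = n

lemma good_zero (Δ : ℕ) : Good (F := F) Δ 0 := by
  refine ⟨0, ⊥, ?_, ?_⟩
  · intro c hc
    rw [Submodule.mem_bot] at hc
    subst hc
    simp [hammingNorm]
  · rw [effLength_eq, Jset]
    simp

/-- repetition code -/
lemma good_rep (Δ : ℕ) (hΔpos : 0 < Δ) : Good (F := F) Δ Δ := by
  set o : Fin Δ → F := fun _ => 1 with ho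
  refine ⟨Δ, Submodule.span F {o}, ?_, ?_⟩
  · intro c hc
    obtain ⟨a, rfl⟩ := Submodule.mem_span_singleton.mp hc
    by_cases ha : a = 0
    · subst ha; simp [hammingNorm]
    · have : hammingNorm (a • o) = Δ := by
        rw [hammingNorm]
        rw [show (univ.filter fun i : Fin Δ => (a • o) i ≠ 0) = univ from ?_]
        · simp
        · ext i
          simp [ho, ha]
      rw [this]
  · rw [effLength_eq, Jset]
    rw [show (univ.filter fun i : Fin Δ => ∃ c ∈ Submodule.span F {o}, c i ≠ 0) = univ from ?_]
    · simp
    · ext i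
      simp only [mem_filter, mem_univ, true_and, iff_true]
      exact ⟨o, Submodule.subset_span rfl, by simp [ho]⟩

/-- simplex code of dimension 2: effective length q+1, all weights 0 or q. -/
lemma good_simplex (Δ : ℕ) (hΔdvd : Δ ∣ Fintype.card F) :
    Good (F := F) Δ (Fintype.card F + 1) := by
  classical
  set q := Fintype.card F with hq
  have hcard : Fintype.card (Option F) = q + 1 := by simp [hq]
  set σ : Option F ≃ Fin (q + 1) := Fintype.equivFinOfCardEq hcard with hσ
  set h₁ : Option F → F := fun o => o.elim 1 (fun x => x) with hh₁
  set h₂ : Option F → F := fun o => o.elim 0 (fun _ => 1) with hh₂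
  set g₁ : Fin (q + 1) → F := fun i => h₁ (σ.symm i) with hg₁
  set g₂ : Fin (q + 1) → F := fun i => h₂ (σ.symm i) with hg₂
  refine ⟨q + 1, Submodule.span F {g₁, g₂}, ?_, ?_⟩
  · intro w hw
    obtain ⟨a, b, rfl⟩ := Submodule.mem_span_pair.mp hw
    by_cases hab : a = 0 ∧ b = 0
    · obtain ⟨rfl, rfl⟩ := hab
      simp [hammingNorm]
    · -- weight is exactly q
      have hwt : hammingNorm (a • g₁ + b • g₂) = q := by
        rw [hammingNorm]
        have htrans : (univ.filter fun i : Fin (q+1) => (a • g₁ + b • g₂) i ≠ 0).card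
            = (univ.filter fun o : Option F => a * h₁ o + b * h₂ o ≠ 0).card := by
          refine (Finset.card_equiv σ.symm ?_).symm.trans rfl |>.symm
          · intro i
            simp only [mem_filter, mem_univ, true_and, Pi.add_apply, Pi.smul_apply,
              smul_eq_mul, hg₁, hg₂]
        rw [htrans]
        have hsplit := Finset.card_filter_add_card_filter_not
          (s := (univ : Finset (Option F))) (p := fun o => a * h₁ o + b * h₂ o = 0)
        have hzero : (univ.filter fun o : Option F => a * h₁ o + b * h₂ o = 0).card = 1 := by
          by_cases ha : a = 0
          · have hb : b ≠ 0 := fun hb => hab ⟨ha, hb⟩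
            rw [show (univ.filter fun o : Option F => a * h₁ o + b * h₂ o = 0) = {none} from ?_]
            · simp
            · ext o
              rcases o with _ | x <;> simp [hh₁, hh₂, ha, hb]
          · rw [show (univ.filter fun o : Option F => a * h₁ o + b * h₂ o = 0)
                = {some (-b / a)} from ?_]
            · simp
            · ext o
              rcases o with _ | x
              · simp [hh₁, hh₂, ha]
              · simp only [mem_filter, mem_univ, true_and, mem_singleton, Option.some_inj,
                  hh₁, hh₂, Option.elim]
                rw [mul_one, eq_div_iff ha]
                constructor
                · intro h; linear_combination h
                · intro h; linear_combination h
        have hcardo : (univ : Finset (Option F)).card = q + 1 := by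
          rw [Finset.card_univ, hcard]
        simp only [ne_eq]
        omega
      rw [hwt]
      exact hΔdvd
  · rw [effLength_eq, Jset]
    rw [show (univ.filter fun i : Fin (q+1) => ∃ c ∈ Submodule.span F {g₁, g₂}, c i ≠ 0)
        = univ from ?_]
    · simp
    · ext i
      simp only [mem_filter, mem_univ, true_and, iff_true]
      have hg₁m : g₁ ∈ Submodule.span F {g₁, g₂} := Submodule.subset_span (by simp)
      have hg₂m : g₂ ∈ Submodule.span F {g₁, g₂} := Submodule.subset_span (by simp)
      rcases ho : σ.symm i with _ | x
      · exact ⟨g₁, hg₁m, by simp [hg₁, ho, hh₁]⟩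
      · by_cases hx : x = 0
        · exact ⟨g₂, hg₂m, by simp [hg₂, ho, hh₂]⟩
        · exact ⟨g₁, hg₁m, by simp [hg₁, ho, hh₁, hx]⟩



/-- the gluing linear map -/
def glueMap (m₁ m₂ : ℕ) : ((Fin m₁ → F) × (Fin m₂ → F)) →ₗ[F] (Fin (m₁ + m₂) → F) where
  toFun f := fun i => Sum.elim f.1 f.2 (finSumFinEquiv.symm i)
  map_add' x y := by
    funext i
    rcases h : finSumFinEquiv.symm i with j | j <;> simp [h]
  map_smul' a x := by
    funext i
    rcases h : finSumFinEquiv.symm i with j | j <;> simp [h]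

lemma good_add (Δ : ℕ) {n₁ n₂ : ℕ} (h1 : Good (F := F) Δ n₁) (h2 : Good (F := F) Δ n₂) :
    Good (F := F) Δ (n₁ + n₂) := by
  classical
  obtain ⟨m₁, C₁, hd₁, he₁⟩ := h1
  obtain ⟨m₂, C₂, hd₂, he₂⟩ := h2
  set φ := glueMap (F := F) m₁ m₂ with hφ
  refine ⟨m₁ + m₂, Submodule.map φ (C₁.prod C₂), ?_, ?_⟩
  · rintro c hc
    rw [Submodule.mem_map] at hc
    obtain ⟨⟨c₁, c₂⟩, hmem, rfl⟩ := hc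
    rw [Submodule.mem_prod] at hmem
    obtain ⟨hm1, hm2⟩ := hmem
    have hnorm : hammingNorm (φ (c₁, c₂)) = hammingNorm c₁ + hammingNorm c₂ := by
      have hstep : hammingNorm (φ (c₁, c₂))
          = (univ.filter fun x : Fin m₁ ⊕ Fin m₂ => Sum.elim c₁ c₂ x ≠ 0).card := by
        rw [hammingNorm]
        refine (Finset.card_equiv finSumFinEquiv ?_).symm
        intro x
        simp only [mem_filter, mem_univ, true_and, hφ, glueMap, LinearMap.coe_mk,
          AddHom.coe_mk, Equiv.symm_apply_apply]
      rw [hstep, hammingNorm, hammingNorm]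
      simp only [Finset.card_filter]
      rw [Fintype.sum_sum_type]
      simp
      congr 1 <;> exact Finset.sum_congr rfl fun x _ => by split_ifs <;> simp_all
    rw [hnorm]
    exact Nat.dvd_add (hd₁ c₁ hm1) (hd₂ c₂ hm2)
  · rw [effLength_eq, Jset]
    rw [← he₁, ← he₂, effLength_eq, effLength_eq, Jset, Jset]
    have hstep : (univ.filter fun i : Fin (m₁ + m₂) =>
          ∃ c ∈ Submodule.map φ (C₁.prod C₂), c i ≠ 0).card
        = (univ.filter fun x : Fin m₁ ⊕ Fin m₂ =>
            ∃ c₁ ∈ C₁, ∃ c₂ ∈ C₂, Sum.elim c₁ c₂ x ≠ 0).card := by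
      refine (Finset.card_equiv finSumFinEquiv ?_).symm
      intro x
      simp only [mem_filter, mem_univ, true_and]
      constructor
      · rintro ⟨c₁, hm1, c₂, hm2, hne⟩
        refine ⟨φ (c₁, c₂), Submodule.mem_map_of_mem (p := C₁.prod C₂) ⟨hm1, hm2⟩, ?_⟩
        simpa only [hφ, glueMap, LinearMap.coe_mk, AddHom.coe_mk, Equiv.symm_apply_apply]
          using hne
      · rintro ⟨c, hc, hne⟩
        rw [Submodule.mem_map] at hc
        obtain ⟨⟨c₁, c₂⟩, hmem, rfl⟩ := hc
        rw [Submodule.mem_prod] at hmem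
        refine ⟨c₁, hmem.1, c₂, hmem.2, ?_⟩
        simpa only [hφ, glueMap, LinearMap.coe_mk, AddHom.coe_mk, Equiv.symm_apply_apply]
          using hne
    rw [hstep]
    simp only [Finset.card_filter]
    rw [Fintype.sum_sum_type]
    congr 1
    · refine Finset.sum_congr rfl fun j _ => ?_
      congr 1
      simp only [Sum.elim_inl, eq_iff_iff]
      constructor
      · rintro ⟨c₁, hm1, _, _, hne⟩; exact ⟨c₁, hm1, hne⟩
      · rintro ⟨c₁, hm1, hne⟩; exact ⟨c₁, hm1, 0, C₂.zero_mem, hne⟩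
    · refine Finset.sum_congr rfl fun j _ => ?_
      congr 1
      simp only [Sum.elim_inr, eq_iff_iff]
      constructor
      · rintro ⟨_, _, c₂, hm2, hne⟩; exact ⟨c₂, hm2, hne⟩
      · rintro ⟨c₂, hm2, hne⟩; exact ⟨0, C₁.zero_mem, c₂, hm2, hne⟩
    

end Stmt4Aux

/-- For `q = p^e` and `0 ≤ b ≤ e-1`, a `p^{e-b}`-divisible linear code over
`F_q` of effective length `n` exists iff `n = s·(q+1) + t·p^{e-b}` for some `s, t ∈ ℕ`. -/
theorem stmt_4 (p e b : ℕ) (hp : p.Prime) (he : 1 ≤ e) (hb : b ≤ e - 1)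
    (hF : Fintype.card F = p ^ e) (n : ℕ) :
    (∃ (m : ℕ) (C : Submodule F (Fin m → F)),
        IsDivisibleCode F (p ^ (e - b)) C ∧ effLength F C = n) ↔
      ∃ s t : ℕ, n = s * (p ^ e + 1) + t * p ^ (e - b) := by
  classical
  set Δ := p ^ (e - b) with hΔ
  have hΔpos : 0 < Δ := pow_pos hp.pos _
  have hΔdvd : Δ ∣ Fintype.card F := by
    rw [hF]
    exact pow_dvd_pow p (Nat.sub_le e b)
  constructor
  · rintro ⟨m, C, hdiv, heff⟩
    obtain ⟨s, t, h⟩ := Stmt4Aux.forward Δ hΔpos hΔdvd C hdiv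
    exact ⟨s, t, by rw [← hF, ← heff]; exact h⟩
  · rintro ⟨s, t, rfl⟩
    have key : ∀ s t : ℕ, Stmt4Aux.Good (F := F) Δ (s * (Fintype.card F + 1) + t * Δ) := by
      intro s t
      induction t with
      | zero =>
        simp only [Nat.zero_mul, Nat.add_zero]
        induction s with
        | zero => simpa using Stmt4Aux.good_zero (F := F) Δ
        | succ s ih =>
          have h := Stmt4Aux.good_add Δ ih (Stmt4Aux.good_simplex Δ hΔdvd)
          rw [Nat.succ_mul]
          exact h
      | succ t ih =>
        have h := Stmt4Aux.good_add Δ ih (Stmt4Aux.good_rep Δ hΔpos)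
        rw [show s * (Fintype.card F + 1) + (t + 1) * Δ
            = (s * (Fintype.card F + 1) + t * Δ) + Δ by ring]
        exact h
    have := key s t
    rw [hF] at this
    exact this


end
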